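/- arXiv:1505.06595 — 5 statements merged into one kernel-verified Lean document; each statement's English description precedes it below -/
import Mathlib

section
/- Let (G, +) be an abelian group and φ an automorphism of G. The subgroup of the permutation group of G generated by the left translations L_a : x ↦ a − φ(a) + φ(x) of the affine quandle Aff(G, φ) acts transitively on G if and only if the map x ↦ x − φ(x) is surjective. (An affine quandle is connected if and only if x ↦ x − φ(x) is onto.) -/
/-- The left translation `x ↦ a - φ a + φ x` of the affine quandle `Aff(G, φ)`,
as a permutation of `G`. -/
def affTrans {G : Type*} [AddCommGroup G] (φ : G ≃+ G) (a : G) : Equiv.Perm G :=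
  φ.toEquiv.trans (Equiv.addLeft (a - φ a))

/-- the subgroup of the permutation group of `G` generated by the
left translations of the affine quandle `Aff(G, φ)` acts transitively on `G`
if and only if the map `x ↦ x - φ x` is surjective. -/
theorem affine_connected_iff {G : Type*} [AddCommGroup G] (φ : G ≃+ G) :
    (∀ b c : G, ∃ g ∈ Subgroup.closure (Set.range (affTrans φ)), g b = c) ↔
      Function.Surjective fun x : G => x - φ x := by
  set ψ : G →+ G := AddMonoidHom.id G - φ.toAddMonoidHom with hψdef
  have hψ : ∀ x : G, ψ x = x - φ x := fun x => rfl
  have haff : ∀ a x : G, affTrans φ a x = a - φ a + φ x := fun a x => rfl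
  constructor
  · intro htrans
    have key : ∀ g ∈ Subgroup.closure (Set.range (affTrans φ)),
        ∀ x : G, g x - x ∈ ψ.range := by
      intro g hg
      induction hg using Subgroup.closure_induction with
      | mem g hg =>
        obtain ⟨a, rfl⟩ := hg
        intro x
        have : affTrans φ a x - x = ψ a - ψ x := by
          rw [haff, hψ, hψ]; abel
        rw [this]
        exact sub_mem (AddMonoidHom.mem_range.mpr ⟨a, rfl⟩)
          (AddMonoidHom.mem_range.mpr ⟨x, rfl⟩)
      | one => intro x; simpa using zero_mem ψ.range
      | mul g h hg hh ihg ihh =>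
        intro x
        have : (g * h) x - x = (g (h x) - h x) + (h x - x) := by
          simp only [Equiv.Perm.mul_apply]; abel
        rw [this]
        exact add_mem (ihg (h x)) (ihh x)
      | inv g hg ihg =>
        intro x
        have : g⁻¹ x - x = -(g (g⁻¹ x) - g⁻¹ x) := by
          simp
        rw [this]
        exact neg_mem (ihg (g⁻¹ x))
    intro y
    obtain ⟨g, hg, hgy⟩ := htrans 0 y
    have := key g hg 0
    rw [hgy, sub_zero] at this
    obtain ⟨x, hx⟩ := this
    exact ⟨x, hx⟩
  · intro hsurj b c
    obtain ⟨a, ha⟩ := hsurj (c - φ b)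
    refine ⟨affTrans φ a, Subgroup.subset_closure ⟨a, rfl⟩, ?_⟩
    rw [haff]
    simp only at ha
    rw [ha]
    abel
end

section
/- Let (G, +) be an abelian group and φ an automorphism of G. For every b ∈ G, the orbit of b under the subgroup of the permutation group of G generated by the left translations L_a : x ↦ a − φ(a) + φ(x) of the affine quandle Aff(G, φ) equals the coset b + {x − φ(x) : x ∈ G} of the range of the additive endomorphism id − φ. -/
lemma affTrans_apply {G : Type*} [AddCommGroup G] (φ : G ≃+ G) (a x : G) :
    affTrans φ a x = a - φ a + φ x := rfl

lemma affine_orbit_aux {G : Type*} [AddCommGroup G] (φ : G ≃+ G)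
    (g : Equiv.Perm G) (hg : g ∈ Subgroup.closure (Set.range (affTrans φ))) :
    ∀ b : G, ∃ x : G, g b = b + (x - φ x) := by
  induction hg using Subgroup.closure_induction with
  | mem g hg =>
    obtain ⟨a, rfl⟩ := hg
    intro b
    refine ⟨a - b, ?_⟩
    simp only [affTrans_apply, map_sub]
    abel
  | one => intro b; exact ⟨0, by simp⟩
  | mul g h _ _ ihg ihh =>
    intro b
    obtain ⟨y, hy⟩ := ihh b
    obtain ⟨x, hx⟩ := ihg (h b)
    refine ⟨x + y, ?_⟩
    rw [Equiv.Perm.mul_apply, hx, hy, map_add]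
    abel
  | inv g _ ih =>
    intro b
    obtain ⟨x, hx⟩ := ih (g⁻¹ b)
    refine ⟨-x, ?_⟩
    have : b = g⁻¹ b + (x - φ x) := by
      conv_lhs => rw [← (show g (g⁻¹ b) = b from Equiv.apply_symm_apply g b), hx]
    have h2 : g⁻¹ b = b - (x - φ x) := eq_sub_of_add_eq this.symm
    rw [h2, map_neg]
    abel

/-- for every `b ∈ G`, the orbit of `b` under the subgroup of the
permutation group of `G` generated by the left translations of the affine
quandle `Aff(G, φ)` equals the coset `b + {x - φ x : x ∈ G}` of the range of
the additive endomorphism `id - φ`. -/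
theorem affine_orbit {G : Type*} [AddCommGroup G] (φ : G ≃+ G) (b : G) :
    {c : G | ∃ g ∈ Subgroup.closure (Set.range (affTrans φ)), g b = c} =
      {c : G | ∃ x : G, c = b + (x - φ x)} := by
  ext c
  simp only [Set.mem_setOf_eq]
  constructor
  · rintro ⟨g, hg, rfl⟩
    obtain ⟨x, hx⟩ := affine_orbit_aux φ g hg b
    exact ⟨x, hx⟩
  · rintro ⟨x, rfl⟩
    refine ⟨affTrans φ (b + x), Subgroup.subset_closure ⟨_, rfl⟩, ?_⟩
    simp only [affTrans_apply, map_add]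
    abel
end

section
/- Let (A, T) be a crossing system and Q a finite quandle. If (A, T) admits a non-trivial Q-coloring (a coloring f : A → Q that is not constant), then there exists a finite simple quandle Q' with |Q'| ≤ |Q| such that (A, T) admits a non-trivial Q'-coloring. -/
/-- A quandle structure on a type: idempotent, bijective left translations,
left self-distributive. -/
structure IsQuandle {Q : Type*} (op : Q → Q → Q) : Prop where
  idem : ∀ a, op a a = a
  leftBij : ∀ a, Function.Bijective fun x => op a x
  selfDistrib : ∀ a b c, op a (op b c) = op (op a b) (op a c)

/-- A congruence on a quandle: an equivalence relation compatible with the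
operation. -/
def IsCongruence {Q : Type*} (op : Q → Q → Q) (r : Q → Q → Prop) : Prop :=
  Equivalence r ∧ ∀ a b c d, r a b → r c d → r (op a c) (op b d)

/-- A quandle is simple if it has at least two elements and its only
congruences are equality and the total relation. -/
def IsSimpleQuandle {Q : Type*} (op : Q → Q → Q) : Prop :=
  Nontrivial Q ∧ ∀ r : Q → Q → Prop, IsCongruence op r →
    (∀ a b, r a b ↔ a = b) ∨ (∀ a b, r a b)

theorem aux_simple {A : Type*} (T : Set (A × A × A)) :
    ∀ n (Q : Type) (_ : Fintype Q) (op : Q → Q → Q) (_ : IsQuandle op)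
      (f : A → Q) (_ : ∀ t ∈ T, op (f t.1) (f t.2.1) = f t.2.2)
      (_ : ∃ a b, f a ≠ f b), Fintype.card Q ≤ n →
    ∃ (Q' : Type) (_ : Fintype Q') (op' : Q' → Q' → Q'),
      IsQuandle op' ∧ IsSimpleQuandle op' ∧ Fintype.card Q' ≤ Fintype.card Q ∧
      ∃ f' : A → Q', (∀ t ∈ T, op' (f' t.1) (f' t.2.1) = f' t.2.2) ∧
        ∃ a b, f' a ≠ f' b := by
  intro n
  induction n with
  | zero =>
    intro Q _ op hQ f hf hnt hcard
    obtain ⟨a, b, hab⟩ := hnt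
    have : Nontrivial Q := ⟨f a, f b, hab⟩
    have := Fintype.one_lt_card (α := Q)
    omega
  | succ n ih =>
    intro Q instQ op hQ f hf hnt hcard
    classical
    obtain ⟨a, b, hab⟩ := hnt
    have hnontriv : Nontrivial Q := ⟨f a, f b, hab⟩
    by_cases hsimple : IsSimpleQuandle op
    · exact ⟨Q, instQ, op, hQ, hsimple, le_refl _, f, hf, a, b, hab⟩
    · -- get a nontrivial proper congruence
      have hr : ¬ ∀ r : Q → Q → Prop, IsCongruence op r →
          (∀ a b, r a b ↔ a = b) ∨ (∀ a b, r a b) :=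
        fun h => hsimple ⟨hnontriv, h⟩
      push_neg at hr
      obtain ⟨r, hrc, hrne, c, d, hcd⟩ := hr
      replace hrne : ¬(∀ a b, r a b ↔ a = b) := by
        intro h
        obtain ⟨x, y, h1⟩ := hrne
        rcases h1 with ⟨h2, h3⟩ | ⟨h2, h3⟩
        · exact h3 ((h x y).1 h2)
        · exact h2 ((h x y).2 h3)
      by_cases hcase : ∃ a b, ¬ r (f a) (f b)
      · -- quotient case
        obtain ⟨a', b', hab'⟩ := hcase
        set s : Setoid Q := ⟨r, hrc.1⟩ with hs
        let Q₁ := Quotient s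
        let op₁ : Q₁ → Q₁ → Q₁ := Quotient.map₂ op
          (fun x u hxu y v hyv => hrc.2 _ _ _ _ hxu hyv)
        have hmk : ∀ x y : Q, op₁ ⟦x⟧ ⟦y⟧ = ⟦op x y⟧ := fun x y => rfl
        have hQ₁ : IsQuandle op₁ := by
          refine ⟨?_, ?_, ?_⟩
          · intro x; induction x using Quotient.ind
            rw [hmk, hQ.idem]
          · intro x
            rw [← Finite.surjective_iff_bijective]
            intro y
            induction x using Quotient.ind with | _ x =>
            induction y using Quotient.ind with | _ y =>
            obtain ⟨z, hz⟩ := (hQ.leftBij x).2 y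
            exact ⟨⟦z⟧, by show op₁ ⟦x⟧ ⟦z⟧ = ⟦y⟧; rw [hmk]; exact congrArg _ hz⟩
          · intro x y z
            induction x using Quotient.ind with | _ x =>
            induction y using Quotient.ind with | _ y =>
            induction z using Quotient.ind with | _ z =>
            show (⟦op x (op y z)⟧ : Q₁) = ⟦op (op x y) (op x z)⟧
            rw [hQ.selfDistrib]
        -- find witnesses p q with p ≠ q and r p q
        have hpq : ∃ p q : Q, p ≠ q ∧ r p q := by
          by_contra h
          push_neg at h
          apply hrne
          intro x y
          constructor
          · intro hxy
            by_contra hne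
            exact h x y hne hxy
          · rintro rfl; exact hrc.1.refl x
        obtain ⟨p, q, hpqne, hpqr⟩ := hpq
        have hcardlt : Fintype.card Q₁ < Fintype.card Q := by
          apply Fintype.card_lt_of_surjective_not_injective
            (Quotient.mk s) (fun y => Quotient.exists_rep y)
          intro hinj
          exact hpqne (hinj (Quotient.sound hpqr))
        have hQ₁card : Fintype.card Q₁ ≤ n := by omega
        obtain ⟨Q', iQ', op', h1, h2, h3, f', h4, h5⟩ :=
          ih Q₁ inferInstance op₁ hQ₁ (fun x => ⟦f x⟧)
            (fun t ht => by rw [hmk, hf t ht]) 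
            ⟨a', b', fun h => hab' (Quotient.exact h)⟩ hQ₁card
        exact ⟨Q', iQ', op', h1, h2, h3.trans hcardlt.le, f', h4, h5⟩
      · -- subquandle case: image lies in one congruence class
        push_neg at hcase
        let C : Set Q := {x | r x (f a)}
        have hclosed : ∀ x y, x ∈ C → y ∈ C → op x y ∈ C := by
          intro x y hx hy
          have := hrc.2 _ _ _ _ hx hy
          rwa [hQ.idem] at this
        let op' : C → C → C := fun x y => ⟨op x y, hclosed _ _ x.2 y.2⟩
        have hQ' : IsQuandle op' := by
          refine ⟨?_, ?_, ?_⟩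
          · intro x; exact Subtype.ext (hQ.idem x)
          · intro x
            rw [← Finite.injective_iff_bijective]
            intro y z h
            exact Subtype.ext ((hQ.leftBij x).1 (congrArg Subtype.val h))
          · intro x y z; exact Subtype.ext (hQ.selfDistrib x y z)
        have hcardlt : Fintype.card C < Fintype.card Q := by
          have : ∃ x, x ∉ C := by
            by_contra h
            push_neg at h
            exact hcd (hrc.1.trans (h c) (hrc.1.symm (h d)))
          obtain ⟨x, hx⟩ := this
          exact Fintype.card_subtype_lt hx
        let f' : A → C := fun u => ⟨f u, hcase u a⟩
        obtain ⟨Q', iQ', op'', h1, h2, h3, f'', h4, h5⟩ :=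
          ih C inferInstance op' hQ' f'
            (fun t ht => Subtype.ext (hf t ht))
            ⟨a, b, fun h => hab (congrArg Subtype.val h)⟩ (by omega)
        exact ⟨Q', iQ', op'', h1, h2, h3.trans hcardlt.le, f'', h4, h5⟩

/-- if a crossing system `(A, T)` admits a non-trivial coloring
by a finite quandle `Q`, then it admits a non-trivial coloring by some finite
simple quandle `Q'` with `|Q'| ≤ |Q|`. -/
theorem nontrivially_colorable_by_simple {A : Type*} (T : Set (A × A × A))
    {Q : Type} [Fintype Q] (op : Q → Q → Q) (hQ : IsQuandle op)
    (f : A → Q) (hf : ∀ t ∈ T, op (f t.1) (f t.2.1) = f t.2.2)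
    (hnt : ∃ a b, f a ≠ f b) :
    ∃ (Q' : Type) (_ : Fintype Q') (op' : Q' → Q' → Q'),
      IsQuandle op' ∧ IsSimpleQuandle op' ∧ Fintype.card Q' ≤ Fintype.card Q ∧
      ∃ f' : A → Q', (∀ t ∈ T, op' (f' t.1) (f' t.2.1) = f' t.2.2) ∧
        ∃ a b, f' a ≠ f' b := by
  exact aux_simple T (Fintype.card Q) Q ‹_› op hQ f hf hnt le_rfl
end

section
/- Symmetry breaking for coloring counts: let Q be a finite connected quandle, (A, T) a crossing system with A finite, and a₁ ∈ A. Then for all c, d ∈ Q, the number of Q-colorings f of (A, T) with f(a₁) = c equals the number of Q-colorings with f(a₁) = d; consequently, the total number of Q-colorings of (A, T) equals |Q| times the number of Q-colorings with f(a₁) = c, for any fixed c ∈ Q. The same equalities hold with 'Q-coloring' replaced by 'non-trivial Q-coloring' throughout. -/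
/-- A `Q`-coloring of the crossing system `(A, T)`. -/
def IsColoring {A Q : Type*} (T : Set (A × A × A)) (op : Q → Q → Q) (f : A → Q) : Prop :=
  ∀ t ∈ T, op (f t.1) (f t.2.1) = f t.2.2

/-- The subgroup of permutations preserving the operation. -/
def autSubgroup {Q : Type*} (op : Q → Q → Q) : Subgroup (Equiv.Perm Q) where
  carrier := {e | ∀ x y, e (op x y) = op (e x) (e y)}
  mul_mem' := by
    intro a b ha hb x y
    simp only [Set.mem_setOf_eq] at ha hb
    simp only [Equiv.Perm.mul_apply, hb, ha]
  one_mem' := by intro x y; rfl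
  inv_mem' := by
    intro a ha x y
    simp only [Set.mem_setOf_eq] at ha ⊢
    apply a.injective
    rw [ha, Equiv.Perm.coe_inv, Equiv.apply_symm_apply, Equiv.apply_symm_apply, Equiv.apply_symm_apply]

/-- symmetry breaking for coloring counts over a finite connected
quandle `Q`: for all colors `c, d`, the numbers of (`non-trivial`) colorings
with prescribed color `c`, resp. `d`, of a fixed arc `a₁` agree, and the total
number of (non-trivial) colorings is `|Q|` times the number of those with
`f a₁ = c`. -/
theorem symmetry_breaking {Q : Type} [Fintype Q] (op : Q → Q → Q) (hQ : IsQuandle op)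
    (hconn : ∀ b c : Q,
      ∃ g ∈ Subgroup.closure {e : Equiv.Perm Q | ∃ a, ∀ x, e x = op a x}, g b = c)
    {A : Type} [Fintype A] (T : Set (A × A × A)) (a₁ : A) :
    (∀ c d : Q,
      Nat.card {f : A → Q // IsColoring T op f ∧ f a₁ = c} =
        Nat.card {f : A → Q // IsColoring T op f ∧ f a₁ = d}) ∧
    (∀ c : Q,
      Nat.card {f : A → Q // IsColoring T op f} =
        Fintype.card Q * Nat.card {f : A → Q // IsColoring T op f ∧ f a₁ = c}) ∧
    (∀ c d : Q,
      Nat.card {f : A → Q // IsColoring T op f ∧ (∃ a b, f a ≠ f b) ∧ f a₁ = c} =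
        Nat.card {f : A → Q // IsColoring T op f ∧ (∃ a b, f a ≠ f b) ∧ f a₁ = d}) ∧
    (∀ c : Q,
      Nat.card {f : A → Q // IsColoring T op f ∧ (∃ a b, f a ≠ f b)} =
        Fintype.card Q *
          Nat.card {f : A → Q // IsColoring T op f ∧ (∃ a b, f a ≠ f b) ∧ f a₁ = c}) := by
  classical
  set S : Set (Equiv.Perm Q) := {e : Equiv.Perm Q | ∃ a, ∀ x, e x = op a x} with hS
  -- every element of the closure is an automorphism of `op`
  have haut : ∀ g ∈ Subgroup.closure S, ∀ x y, g (op x y) = op (g x) (g y) := by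
    intro g hg
    have hle : Subgroup.closure S ≤ autSubgroup op := by
      apply (Subgroup.closure_le _).2
      rintro e ⟨a, ha⟩ x y
      show e (op x y) = op (e x) (e y)
      rw [ha, ha, ha]
      exact hQ.selfDistrib a x y
    exact hle hg
  -- colorings are stable under composing with a closure element
  have hcol : ∀ g ∈ Subgroup.closure S, ∀ f : A → Q,
      IsColoring T op f → IsColoring T op (⇑g ∘ f) := by
    intro g hg f hf t ht
    simp only [Function.comp_apply]
    rw [← haut g hg, hf t ht]
  -- generic symmetry lemma for any predicate stable under the closure action
  have key : ∀ (P : (A → Q) → Prop),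
      (∀ g ∈ Subgroup.closure S, ∀ f, P f → P (⇑g ∘ f)) →
      ∀ c d : Q, Nat.card {f : A → Q // P f ∧ f a₁ = c} =
        Nat.card {f : A → Q // P f ∧ f a₁ = d} := by
    intro P hP c d
    obtain ⟨g, hg, hgc⟩ := hconn c d
    have hg' : g⁻¹ ∈ Subgroup.closure S := inv_mem hg
    refine Nat.card_congr ⟨fun f => ⟨⇑g ∘ f.1, hP g hg f.1 f.2.1, by
        simp [Function.comp_apply, f.2.2, hgc]⟩,
      fun f => ⟨⇑g⁻¹ ∘ f.1, hP g⁻¹ hg' f.1 f.2.1, by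
        have : g⁻¹ (f.1 a₁) = c := by
          rw [f.2.2, ← hgc]; exact g.symm_apply_apply c
        simpa [Function.comp_apply] using this⟩, ?_, ?_⟩
    · rintro ⟨f, hf⟩
      ext x
      simp [Function.comp_apply]
    · rintro ⟨f, hf⟩
      ext x
      simp [Function.comp_apply]
  -- decomposition by value at a₁
  have hsum : ∀ (P : (A → Q) → Prop),
      Nat.card {f : A → Q // P f} = ∑ c : Q, Nat.card {f : A → Q // P f ∧ f a₁ = c} := by
    intro P
    have e : {f : A → Q // P f} ≃ Σ c : Q, {f : A → Q // P f ∧ f a₁ = c} :=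
      { toFun := fun f => ⟨f.1 a₁, f.1, f.2, rfl⟩
        invFun := fun x => ⟨x.2.1, x.2.2.1⟩
        left_inv := fun f => rfl
        right_inv := by rintro ⟨c, f, hf, rfl⟩; rfl }
    rw [Nat.card_congr e]
    simp [Nat.card_eq_fintype_card, Fintype.card_sigma]
  have hmul : ∀ (P : (A → Q) → Prop),
      (∀ g ∈ Subgroup.closure S, ∀ f, P f → P (⇑g ∘ f)) →
      ∀ c : Q, Nat.card {f : A → Q // P f} =
        Fintype.card Q * Nat.card {f : A → Q // P f ∧ f a₁ = c} := by
    intro P hP c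
    rw [hsum P]
    rw [Finset.sum_congr rfl fun d _ => key P hP d c]
    simp [Finset.sum_const, Finset.card_univ, mul_comm]
  have hnt : ∀ g ∈ Subgroup.closure S, ∀ f : A → Q,
      (IsColoring T op f ∧ ∃ a b, f a ≠ f b) →
      (IsColoring T op (⇑g ∘ f) ∧ ∃ a b, (⇑g ∘ f) a ≠ (⇑g ∘ f) b) := by
    rintro g hg f ⟨hf, a, b, hab⟩
    exact ⟨hcol g hg f hf, a, b, fun h => hab (g.injective h)⟩
  refine ⟨key _ hcol, hmul _ hcol, ?_, ?_⟩
  · intro c d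
    have := key (fun f => IsColoring T op f ∧ ∃ a b, f a ≠ f b) hnt c d
    simpa [and_assoc] using this
  · intro c
    have := hmul (fun f => IsColoring T op f ∧ ∃ a b, f a ≠ f b) hnt c
    simpa [and_assoc] using this
end

section
/- Correctness of the SAT encoding of quandle colorability: let Q be a finite nonempty quandle and (A, T) a crossing system with A finite. Then there exists an assignment v : A × Q → Bool satisfying all of the following clauses — (i) for each α ∈ A there is at least one c ∈ Q with v(α, c) = true, and for each α ∈ A and distinct c, d ∈ Q not both v(α, c) and v(α, d) are true; (ii) for each c ∈ Q, not every α ∈ A has v(α, c) = true; (iii) for each crossing (α, β, γ) ∈ T and all c, d ∈ Q, if v(α, c) = true and v(β, d) = true then v(γ, c ◃ d) = true — if and only if (A, T) admits a non-trivial Q-coloring. -/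
/-- correctness of the SAT encoding of quandle colorability: for
a finite nonempty quandle `Q` and a finite crossing system `(A, T)`, there is
a satisfying boolean assignment for the clauses (i)-(iii) if and only if
`(A, T)` admits a non-trivial `Q`-coloring. -/
theorem sat_encoding_correct {A : Type*} [Finite A] {Q : Type*} [Finite Q] [Nonempty Q]
    (op : Q → Q → Q) (hQ : IsQuandle op) (T : Set (A × A × A)) :
    (∃ v : A × Q → Bool,
      (∀ α : A, ∃ c : Q, v (α, c) = true) ∧
      (∀ α : A, ∀ c d : Q, c ≠ d → ¬(v (α, c) = true ∧ v (α, d) = true)) ∧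
      (∀ c : Q, ¬(∀ α : A, v (α, c) = true)) ∧
      (∀ t ∈ T, ∀ c d : Q,
        v (t.1, c) = true → v (t.2.1, d) = true → v (t.2.2, op c d) = true)) ↔
    (∃ f : A → Q, (∀ t ∈ T, op (f t.1) (f t.2.1) = f t.2.2) ∧ ∃ a b, f a ≠ f b) := by
  classical
  constructor
  · rintro ⟨v, h1, h2, h3, h4⟩
    choose f hf using h1
    refine ⟨f, fun t ht => ?_, ?_⟩
    · have := h4 t ht (f t.1) (f t.2.1) (hf t.1) (hf t.2.1)
      by_contra hne
      exact h2 t.2.2 (op (f t.1) (f t.2.1)) (f t.2.2) hne ⟨this, hf t.2.2⟩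
    · by_contra hcon
      push_neg at hcon
      rcases isEmpty_or_nonempty A with hA | hA
      · exact h3 (Classical.arbitrary Q) (fun α => (IsEmpty.false α).elim)
      · obtain ⟨α₀⟩ := hA
        apply h3 (f α₀)
        intro α
        rw [← hcon α α₀]
        exact hf α
  · rintro ⟨f, hcol, a, b, hab⟩
    refine ⟨fun p => decide (f p.1 = p.2), fun α => ⟨f α, by simp⟩,
      fun α c d hcd ⟨hc, hd⟩ => ?_, fun c hall => ?_, fun t ht c d hc hd => ?_⟩
    · simp only [decide_eq_true_eq] at hc hd
      exact hcd (hc ▸ hd)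
    · have ha := hall a; have hb := hall b
      simp only [decide_eq_true_eq] at ha hb
      exact hab (ha.trans hb.symm)
    · simp only [decide_eq_true_eq] at hc hd ⊢
      rw [← hc, ← hd]; exact (hcol t ht).symm
end
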